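/- arXiv:1101.2366 — 3 statements merged into one kernel-verified Lean document; each statement's English description precedes it below -/
import Mathlib

section
/- For every n ≥ 0, the polynomial identity X^{(1+(-1)^n)/2} · P_{φ^n(2)} + X^{(1-(-1)^n)/2} · P_{φ^n(11)} = X + 1 holds, where for a word w = a_1⋯a_k over {1,2}, P_w(X) = (-X)^k + Σ_{i=1}^k a_i (-X)^{k-i}, and φ is the morphism φ(1)=2, φ(2)=211. -/
/-- The morphism φ on the alphabet {1,2}: φ(1) = 2, φ(2) = 211. -/
def phi : ℕ → List ℕ
  | 1 => [2]
  | 2 => [2, 1, 1]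
  | _ => []

/-- Extension of φ to words by concatenation. -/
def phiW (w : List ℕ) : List ℕ := w.flatMap phi

/-- The polynomial P_{a₁⋯a_k}(X) = (-X)^k + Σ_{i=1}^k a_i (-X)^{k-i}, evaluated at x. -/
def P (w : List ℕ) (x : ℝ) : ℝ :=
  (-x) ^ w.length + ∑ i ∈ Finset.range w.length, (w.getD i 0 : ℝ) * (-x) ^ (w.length - 1 - i)

lemma P_cons (a : ℕ) (v : List ℕ) (x : ℝ) :
    P (a :: v) x = (-x) ^ v.length * ((a : ℝ) - x - 1) + P v x := by
  unfold P
  rw [List.length_cons, Finset.sum_range_succ']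
  have hs : ∑ i ∈ Finset.range v.length,
        ((a :: v).getD (i + 1) 0 : ℝ) * (-x) ^ (v.length + 1 - 1 - (i + 1))
      = ∑ i ∈ Finset.range v.length, (v.getD i 0 : ℝ) * (-x) ^ (v.length - 1 - i) := by
    refine Finset.sum_congr rfl fun i _ => ?_
    have h : v.length + 1 - 1 - (i + 1) = v.length - 1 - i := by omega
    rw [h, List.getD_cons_succ]
  rw [hs]
  simp only [List.getD_cons_zero, Nat.add_sub_cancel, Nat.sub_zero, pow_succ]
  ring

lemma P_append (w u : List ℕ) (x : ℝ) :
    P (w ++ u) x = (-x) ^ u.length * (P w x - 1) + P u x := by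
  induction w with
  | nil => simp [P]
  | cons a v ih =>
    rw [List.cons_append, P_cons, P_cons, ih, List.length_append]
    rw [pow_add]
    ring

lemma phiW_append (w u : List ℕ) : phiW (w ++ u) = phiW w ++ phiW u := by
  simp [phiW]

lemma iter_phiW_append (n : ℕ) (w u : List ℕ) :
    phiW^[n] (w ++ u) = phiW^[n] w ++ phiW^[n] u := by
  induction n generalizing w u with
  | zero => simp
  | succ m ih =>
    rw [Function.iterate_succ_apply, Function.iterate_succ_apply,
      Function.iterate_succ_apply, phiW_append, ih]

lemma A_succ (n : ℕ) : phiW^[n+1] [2] = phiW^[n] [2] ++ phiW^[n] [1, 1] := by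
  rw [Function.iterate_succ_apply]
  have h : phiW [2] = [2] ++ [1, 1] := rfl
  rw [h, iter_phiW_append]

lemma B_succ (n : ℕ) : phiW^[n+1] [1, 1] = phiW^[n] [2] ++ phiW^[n] [2] := by
  rw [Function.iterate_succ_apply]
  have h : phiW [1, 1] = [2] ++ [2] := rfl
  rw [h, iter_phiW_append]

lemma parity_len (n : ℕ) :
    Odd (phiW^[n] [2]).length ∧ Even (phiW^[n] [1, 1]).length := by
  induction n with
  | zero => simp
  | succ m ih =>
    rw [A_succ, B_succ, List.length_append, List.length_append]
    constructor
    · exact ih.1.add_even ih.2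
    · exact ih.1.add_odd ih.1

lemma len_diff (n : ℕ) :
    if Even n then (phiW^[n] [1, 1]).length = (phiW^[n] [2]).length + 1
    else (phiW^[n] [2]).length = (phiW^[n] [1, 1]).length + 1 := by
  induction n with
  | zero => simp [phiW]
  | succ m ih =>
    rw [A_succ, B_succ, List.length_append, List.length_append]
    by_cases hm : Even m
    · rw [if_pos hm] at ih
      rw [if_neg (by simp [Nat.even_add_one, hm])]
      omega
    · rw [if_neg hm] at ih
      rw [if_pos (Nat.even_add_one.mpr hm)]
      omega

theorem P_phi_two_add_eleven (n : ℕ) (x : ℝ) :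
    x ^ (if Even n then 1 else 0) * P (phiW^[n] [2]) x
      + x ^ (if Even n then 0 else 1) * P (phiW^[n] [1, 1]) x = x + 1 := by
  induction n with
  | zero =>
    simp [P, Finset.sum_range_succ]
    ring
  | succ m ih =>
    obtain ⟨hA, hB⟩ := parity_len m
    have hd := len_diff m
    rw [A_succ, B_succ, P_append, P_append]
    rw [hA.neg_pow, hB.neg_pow]
    by_cases hm : Even m
    · rw [if_pos hm] at ih hd
      rw [if_neg (by simp [Nat.even_add_one, hm]), if_neg (by simp [Nat.even_add_one, hm])]
      simp only [if_pos hm] at ih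
      rw [hd, pow_succ]
      linear_combination ih
    · rw [if_neg hm] at ih hd
      rw [if_pos (Nat.even_add_one.mpr hm), if_pos (Nat.even_add_one.mpr hm)]
      simp only [if_neg hm] at ih
      rw [hd, pow_succ]
      linear_combination ih
end

section
/- For every x ∈ (0,1] and β > 1, the series Σ_{k=1}^∞ (-d_k(x))/(-β)^k converges to x, where d_1(x) = ⌊βx⌋ + 1 and d_k(x) = d_1(T_{-β}^{k-1}(x)) are the digits generated by the negative beta transformation T_{-β}(x) = -βx + ⌊βx⌋ + 1. -/
/-- The negative beta transformation T_{-β}(x) = -βx + ⌊βx⌋ + 1. -/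
noncomputable def Tneg (β x : ℝ) : ℝ := -β * x + ⌊β * x⌋ + 1

/-- The digits d_k(x) = ⌊β T_{-β}^{k-1}(x)⌋ + 1 (indexed so that `d β x k` is d_{k+1}(x)). -/
noncomputable def d (β x : ℝ) (k : ℕ) : ℤ := ⌊β * (Tneg β)^[k] x⌋ + 1

lemma Tneg_mem (β x : ℝ) : Tneg β x ∈ Set.Ioc (0 : ℝ) 1 := by
  have h1 := Int.fract_nonneg (β * x)
  have h2 := Int.fract_lt_one (β * x)
  unfold Tneg
  unfold Int.fract at h1 h2
  constructor <;> nlinarith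

lemma iter_mem (β x : ℝ) (hx : x ∈ Set.Ioc (0 : ℝ) 1) (n : ℕ) :
    (Tneg β)^[n] x ∈ Set.Ioc (0 : ℝ) 1 := by
  induction n with
  | zero => simpa using hx
  | succ n ih =>
    rw [Function.iterate_succ_apply']
    exact Tneg_mem β _

lemma partial_sum (β : ℝ) (hβ : 1 < β) (x : ℝ) (n : ℕ) :
    ∑ k ∈ Finset.range n, -(d β x k : ℝ) / (-β) ^ (k + 1)
      = x - (Tneg β)^[n] x / (-β) ^ n := by
  have hβ0 : (-β) ≠ 0 := by intro h; nlinarith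
  induction n with
  | zero => simp
  | succ n ih =>
    rw [Finset.sum_range_succ, ih]
    have key : (Tneg β)^[n + 1] x = -β * (Tneg β)^[n] x + (d β x n : ℝ) := by
      rw [Function.iterate_succ_apply', Tneg, d]
      push_cast
      ring
    rw [key]
    field_simp
    ring

theorem neg_beta_expansion (β : ℝ) (hβ : 1 < β) (x : ℝ) (hx : x ∈ Set.Ioc (0 : ℝ) 1) :
    HasSum (fun k : ℕ => -(d β x k : ℝ) / (-β) ^ (k + 1)) x := by
  have hβ0 : (0:ℝ) < β := lt_trans one_pos hβ
  have hd : ∀ k, |(-(d β x k : ℝ) / (-β) ^ (k + 1))| ≤ (β + 1) * (1/β) ^ (k+1) := by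
    intro k
    have hmem := iter_mem β x hx k
    have hdk1 : (1 : ℝ) ≤ (d β x k : ℝ) := by
      have h0 : (1:ℤ) ≤ d β x k := by
        have : (0:ℤ) ≤ ⌊β * (Tneg β)^[k] x⌋ :=
          Int.floor_nonneg.2 (mul_nonneg hβ0.le hmem.1.le)
        unfold d; omega
      exact_mod_cast h0
    have hdk2 : (d β x k : ℝ) ≤ β + 1 := by
      have h1 : (⌊β * (Tneg β)^[k] x⌋ : ℝ) ≤ β * (Tneg β)^[k] x := Int.floor_le _
      have h2 : β * (Tneg β)^[k] x ≤ β := by nlinarith [hmem.2, hmem.1]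
      unfold d; push_cast; linarith
    have hdpos : (0:ℝ) < (d β x k : ℝ) := by linarith
    rw [abs_div, abs_neg, abs_of_pos hdpos, abs_pow, abs_neg, abs_of_pos hβ0,
      div_pow, one_pow, mul_one_div]
    gcongr
  have hsum : Summable (fun k : ℕ => -(d β x k : ℝ) / (-β) ^ (k + 1)) := by
    have hgeo : Summable (fun k : ℕ => (1/β) ^ k) :=
      summable_geometric_of_lt_one (by positivity)
        (by rw [div_lt_one hβ0]; exact hβ)
    have hg : Summable (fun k : ℕ => (β + 1) * (1/β) ^ (k+1)) :=
      (hgeo.mul_left ((β+1) * (1/β))).congr (fun k => by ring)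
    exact Summable.of_norm_bounded hg
      (fun k => by rw [Real.norm_eq_abs]; exact hd k)
  rw [hsum.hasSum_iff_tendsto_nat]
  have hps : ∀ n, ∑ k ∈ Finset.range n, -(d β x k : ℝ) / (-β) ^ (k + 1)
      = x - (Tneg β)^[n] x / (-β) ^ n := fun n => partial_sum β hβ x n
  simp only [hps]
  have : Filter.Tendsto (fun n : ℕ => (Tneg β)^[n] x / (-β) ^ n) Filter.atTop (nhds 0) := by
    apply squeeze_zero_norm (a := fun n : ℕ => (1/β)^n)
    · intro n
      have hmem := iter_mem β x hx n
      rw [norm_div, norm_pow]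
      simp only [Real.norm_eq_abs, abs_neg]
      rw [abs_of_pos hβ0, abs_of_pos hmem.1, one_div, inv_pow,
        div_le_iff₀ (pow_pos hβ0 _), inv_mul_cancel₀ (by positivity)]
      exact hmem.2
    · exact tendsto_pow_atTop_nhds_zero_of_lt_one (by positivity)
        (by rw [div_lt_one hβ0]; exact hβ)
  have := Filter.Tendsto.const_sub x this
  simpa using this
end

section
/- Let β > 1 satisfy β^4 = β + 1, let α be a complex algebraic conjugate of β with |α| > 1, and let σ: ℚ(β) → ℚ(α) be the field homomorphism with σ(β) = α. If x ∈ [0,1] ∩ ℚ(β), then |σ(T_β(x))| ≥ |α|·|σ(x)| − 1, where T_β(x) = βx − ⌊βx⌋. Consequently, if |σ(x)| > 1/(|α| − 1), then |σ(T_β(x))| > |σ(x)|. -/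
theorem conjugate_growth (β : ℝ) (hβ : 1 < β) (hβ4 : β ^ 4 = β + 1)
    (α : ℂ) (hα4 : α ^ 4 = α + 1) (hα : 1 < ‖α‖) (hαβ : α ≠ (β : ℂ))
    (K : IntermediateField ℚ ℝ) (hK : K = IntermediateField.adjoin ℚ {β})
    (hβK : β ∈ K) (σ : K →+* ℂ) (hσ : σ ⟨β, hβK⟩ = α)
    (x : K) (hx : (x : ℝ) ∈ Set.Icc (0 : ℝ) 1)
    (y : K) (hy : (y : ℝ) = β * (x : ℝ) - ⌊β * (x : ℝ)⌋) :
    ‖α‖ * ‖σ x‖ - 1 ≤ ‖σ y‖ ∧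
      (1 / (‖α‖ - 1) < ‖σ x‖ →
        ‖σ x‖ < ‖σ y‖) := by
  have hβ2 : β < 2 := by nlinarith [sq_nonneg β, sq_nonneg (β*β), sq_nonneg (β*β - 2)]
  set n : ℤ := ⌊β * (x : ℝ)⌋ with hn
  have hx0 : (0 : ℝ) ≤ x := hx.1
  have hx1 : (x : ℝ) ≤ 1 := hx.2
  have hn0 : 0 ≤ n := Int.le_floor.2 (by push_cast; positivity)
  have hn1 : n ≤ 1 := by
    have h2 : β * (x : ℝ) < 2 := by nlinarith
    have := Int.floor_lt.2 (by exact_mod_cast h2 : β * (x : ℝ) < (2 : ℤ))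
    omega
  have hyK : y = ⟨β, hβK⟩ * x - (n : K) := by
    apply Subtype.ext
    push_cast
    exact hy
  have hσy : σ y = α * σ x - (n : ℂ) := by
    rw [hyK]
    push_cast [map_sub, map_mul, hσ, map_intCast]
    norm_cast
  have habsn : ‖(n : ℂ)‖ ≤ 1 := by
    rw [Complex.norm_intCast]
    rw [abs_of_nonneg (by exact_mod_cast hn0)]
    exact_mod_cast hn1
  have key : ‖α‖ * ‖σ x‖ - 1 ≤ ‖σ y‖ := by
    have h1 : ‖α * σ x‖ - ‖(n : ℂ)‖ ≤
        ‖α * σ x - (n : ℂ)‖ := by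
      exact (norm_sub_norm_le _ _)
    rw [hσy]
    rw [norm_mul] at h1
    linarith
  refine ⟨key, fun h => ?_⟩
  have hα1 : 0 < ‖α‖ - 1 := by linarith
  have : 1 < (‖α‖ - 1) * ‖σ x‖ := by
    rw [div_lt_iff₀ hα1] at h
    linarith [h]
  nlinarith [key]
end
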